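/- For every ε > 0 there exists δ = ε^⌊1/ε⌋ > 0 such that for any 1-Lipschitz function f : [a,b] → ℝ there exists a subinterval [c,d] ⊆ [a,b] with d − c ≥ δ(b − a) such that f is ε-linear on [c,d], i.e. |f(x) − (f(c) + s_f(c,d)(x − c))| ≤ ε(d − c) for all x ∈ [c,d], where s_f(c,d) = (f(d) − f(c))/(d − c). -/

import Mathlib

open Set

private lemma lip_abs {f : ℝ → ℝ} {c d : ℝ} (hf : LipschitzOnWith 1 f (Set.Icc c d))
    {u v : ℝ} (hu : u ∈ Set.Icc c d) (hv : v ∈ Set.Icc c d) :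
    |f v - f u| ≤ |v - u| := by
  have := hf.dist_le_mul v hv u hu
  simpa [Real.dist_eq] using this

private lemma subdiv (ε : ℝ) (hε : 0 < ε) (c d : ℝ) (hcd : c < d) (f : ℝ → ℝ)
    (hf : LipschitzOnWith 1 f (Set.Icc c d))
    (hs : 0 ≤ (f d - f c) / (d - c))
    (x : ℝ) (hx : x ∈ Set.Icc c d)
    (hgx : ε * (d - c) < |f x - (f c + (f d - f c) / (d - c) * (x - c))|) :
    ∃ c' d', c ≤ c' ∧ c' < d' ∧ d' ≤ d ∧ ε * (d - c) ≤ d' - c' ∧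
      (f d - f c) / (d - c) + ε ≤ (f d' - f c') / (d' - c') := by
  have hdc : (0:ℝ) < d - c := by linarith
  set s := (f d - f c) / (d - c) with hs_def
  have hfd : f d - f c = s * (d - c) := by rw [hs_def, div_mul_cancel₀ _ (ne_of_gt hdc)]
  have hxc := hx.1
  have hxd := hx.2
  have hεdc : 0 < ε * (d - c) := mul_pos hε hdc
  rcases lt_abs.mp hgx with h1g | h2g
  · -- f x is above the line: take [c, x]
    have h1 : f x - f c ≤ x - c := by
      have h := abs_le.mp (lip_abs hf ⟨le_rfl, hcd.le⟩ hx)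
      have h' : |x - c| = x - c := abs_of_nonneg (by linarith)
      rw [h'] at h
      linarith [h.2]
    have hsx : 0 ≤ s * (x - c) := mul_nonneg hs (by linarith)
    have hlen : ε * (d - c) < x - c := by linarith
    have hcx : c < x := by linarith
    refine ⟨c, x, le_rfl, hcx, hxd, hlen.le, ?_⟩
    rw [le_div_iff₀ (by linarith : (0:ℝ) < x - c)]
    have hmono : ε * (x - c) ≤ ε * (d - c) :=
      mul_le_mul_of_nonneg_left (by linarith) hε.le
    nlinarith [h1g, hmono]
  · -- f x is below the line: take [x, d]
    have h2 : f d - f x ≤ d - x := by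
      have h := abs_le.mp (lip_abs hf hx ⟨hcd.le, le_rfl⟩)
      have h' : |d - x| = d - x := abs_of_nonneg (by linarith)
      rw [h'] at h
      linarith [h.2]
    have hsx : 0 ≤ s * (d - x) := mul_nonneg hs (by linarith)
    have hexp : s * (d - c) - s * (x - c) = s * (d - x) := by ring
    have hlen : ε * (d - c) < d - x := by linarith
    have hxd' : x < d := by linarith
    refine ⟨x, d, hxc, hxd', le_rfl, hlen.le, ?_⟩
    rw [le_div_iff₀ (by linarith : (0:ℝ) < d - x)]
    have hmono : ε * (d - x) ≤ ε * (d - c) :=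
      mul_le_mul_of_nonneg_left (by linarith) hε.le
    nlinarith [h2g, hmono]

private lemma key (ε : ℝ) (hε : 0 < ε) (hε1 : ε ≤ 1) :
    ∀ k : ℕ, ∀ c d : ℝ, c < d → ∀ f : ℝ → ℝ, LipschitzOnWith 1 f (Set.Icc c d) →
    0 ≤ (f d - f c) / (d - c) → 1 - (f d - f c) / (d - c) < (k + 1) * ε →
    ∃ c' d', c ≤ c' ∧ c' < d' ∧ d' ≤ d ∧ ε ^ k * (d - c) ≤ d' - c' ∧
      ∀ x ∈ Set.Icc c' d',
        |f x - (f c' + (f d' - f c') / (d' - c') * (x - c'))| ≤ ε * (d' - c') := by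
  intro k
  induction k with
  | zero =>
    intro c d hcd f hf hs hb
    by_cases hlin : ∀ x ∈ Set.Icc c d,
        |f x - (f c + (f d - f c) / (d - c) * (x - c))| ≤ ε * (d - c)
    · exact ⟨c, d, le_rfl, hcd, le_rfl, by rw [pow_zero, one_mul], hlin⟩
    · exfalso
      push_neg at hlin
      obtain ⟨x, hx, hgx⟩ := hlin
      obtain ⟨c', d', h1, h2, h3, h4, h5⟩ := subdiv ε hε c d hcd f hf hs x hx hgx
      -- new slope exceeds 1, contradicting Lipschitz
      have hmem1 : c' ∈ Set.Icc c d := ⟨h1, by linarith⟩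
      have hmem2 : d' ∈ Set.Icc c d := ⟨by linarith, h3⟩
      have habs := abs_le.mp (lip_abs hf hmem1 hmem2)
      have h' : |d' - c'| = d' - c' := abs_of_nonneg (by linarith)
      rw [h'] at habs
      have hsle : (f d' - f c') / (d' - c') ≤ 1 := by
        rw [div_le_one (by linarith : (0:ℝ) < d' - c')]
        linarith [habs.2]
      have hb' : (1:ℝ) - (f d - f c) / (d - c) < ε := by
        have : ((0:ℕ) + 1 : ℝ) * ε = ε := by push_cast; ring
        linarith [hb, this.le, this.ge]
      linarith
  | succ k ih =>
    intro c d hcd f hf hs hb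
    by_cases hlin : ∀ x ∈ Set.Icc c d,
        |f x - (f c + (f d - f c) / (d - c) * (x - c))| ≤ ε * (d - c)
    · refine ⟨c, d, le_rfl, hcd, le_rfl, ?_, hlin⟩
      have h1 : ε ^ (k + 1) ≤ 1 := pow_le_one₀ hε.le hε1
      nlinarith [h1]
    · push_neg at hlin
      obtain ⟨x, hx, hgx⟩ := hlin
      obtain ⟨c', d', h1, h2, h3, h4, h5⟩ := subdiv ε hε c d hcd f hf hs x hx hgx
      have hf' : LipschitzOnWith 1 f (Set.Icc c' d') :=
        hf.mono (Set.Icc_subset_Icc h1 h3)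
      have hs' : 0 ≤ (f d' - f c') / (d' - c') := by linarith
      have hb' : 1 - (f d' - f c') / (d' - c') < (k + 1) * ε := by
        have hcast : ((k : ℝ) + 1 + 1) * ε = (k + 1) * ε + ε := by push_cast; ring
        push_cast at hb ⊢
        linarith
      obtain ⟨c'', d'', g1, g2, g3, g4, g5⟩ := ih c' d' h2 f hf' hs' hb'
      refine ⟨c'', d'', le_trans h1 g1, g2, le_trans g3 h3, ?_, g5⟩
      have hpow : (0:ℝ) ≤ ε ^ k := pow_nonneg hε.le k
      have := mul_le_mul_of_nonneg_left h4 hpow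
      calc ε ^ (k + 1) * (d - c) = ε ^ k * (ε * (d - c)) := by ring
        _ ≤ ε ^ k * (d' - c') := this
        _ ≤ d'' - c'' := g4

theorem bourgain_linear_piece (ε : ℝ) (hε : 0 < ε) (a b : ℝ) (hab : a < b) (f : ℝ → ℝ)
    (hf : LipschitzOnWith 1 f (Set.Icc a b)) :
    ∃ c d : ℝ, a ≤ c ∧ c < d ∧ d ≤ b ∧
      ε ^ (⌊1 / ε⌋₊) * (b - a) ≤ d - c ∧
      ∀ x ∈ Set.Icc c d,
        |f x - (f c + (f d - f c) / (d - c) * (x - c))| ≤ ε * (d - c) := by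
  have hba : (0:ℝ) < b - a := by linarith
  rcases le_or_gt ε 1 with hε1 | hε1
  · -- main case : ε ≤ 1
    have hfloor : (1:ℝ) < ((⌊1 / ε⌋₊ : ℝ) + 1) * ε := by
      have h := Nat.lt_floor_add_one (1 / ε)
      rw [div_lt_iff₀ hε] at h
      exact h
    rcases le_or_gt 0 ((f b - f a) / (b - a)) with hs | hs
    · exact key ε hε hε1 ⌊1 / ε⌋₊ a b hab f hf hs (by linarith)
    · -- apply to -f
      have hnf : LipschitzOnWith 1 (fun x => -f x) (Set.Icc a b) := by
        intro x hx y hy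
        simpa [edist_neg_neg] using hf hx hy
      have hs1 : -(1:ℝ) ≤ (f b - f a) / (b - a) := by
        rw [le_div_iff₀ hba]
        have h := abs_le.mp (lip_abs hf ⟨le_rfl, hab.le⟩ ⟨hab.le, le_rfl⟩)
        have h' : |b - a| = b - a := abs_of_nonneg hba.le
        rw [h'] at h
        linarith [h.1]
      have hs' : 0 ≤ ((fun x => -f x) b - (fun x => -f x) a) / (b - a) := by
        simp only
        have : (-f b - -f a) / (b - a) = -((f b - f a) / (b - a)) := by ring
        rw [this]
        linarith
      have hb' : 1 - ((fun x => -f x) b - (fun x => -f x) a) / (b - a) <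
          ((⌊1 / ε⌋₊ : ℕ) + 1) * ε := by
        simp only
        have heq : (-f b - -f a) / (b - a) = -((f b - f a) / (b - a)) := by ring
        rw [heq]
        push_cast
        linarith
      obtain ⟨c, d, h1, h2, h3, h4, h5⟩ :=
        key ε hε hε1 ⌊1 / ε⌋₊ a b hab (fun x => -f x) hnf hs' hb'
      refine ⟨c, d, h1, h2, h3, h4, fun x hx => ?_⟩
      have h := h5 x hx
      have h : |-f x - (-f c + (-f d - -f c) / (d - c) * (x - c))| ≤ ε * (d - c) := h
      have e : -f x - (-f c + (-f d - -f c) / (d - c) * (x - c)) =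
          -(f x - (f c + (f d - f c) / (d - c) * (x - c))) := by ring
      rw [e, abs_neg] at h
      exact h
  · -- trivial case : ε > 1
    have hn : ⌊1 / ε⌋₊ = 0 := Nat.floor_eq_zero.mpr (by rw [div_lt_one hε]; exact hε1)
    refine ⟨a, b, le_rfl, hab, le_rfl, by rw [hn, pow_zero, one_mul], fun x hx => ?_⟩
    set s := (f b - f a) / (b - a) with hs_def
    have hfb : f b - f a = s * (b - a) := by rw [hs_def, div_mul_cancel₀ _ (ne_of_gt hba)]
    have hxa := hx.1
    have hxb := hx.2
    have hA := abs_le.mp (lip_abs hf ⟨le_rfl, hab.le⟩ hx)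
    have hA' : |x - a| = x - a := abs_of_nonneg (by linarith)
    rw [hA'] at hA
    have hB := abs_le.mp (lip_abs hf hx ⟨hab.le, le_rfl⟩)
    have hB' : |b - x| = b - x := abs_of_nonneg (by linarith)
    rw [hB'] at hB
    have hC := abs_le.mp (lip_abs hf ⟨le_rfl, hab.le⟩ ⟨hab.le, le_rfl⟩)
    have hC' : |b - a| = b - a := abs_of_nonneg hba.le
    rw [hC'] at hC
    have hsabs : |s| ≤ 1 := by
      rw [hs_def, abs_div, abs_of_pos hba, div_le_one hba]
      exact abs_le.mpr ⟨hC.1, hC.2⟩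
    have hD := abs_le.mp hsabs
    have hD1 : s * (x - a) ≤ x - a := by nlinarith [hD.2]
    have hD2 : -(x - a) ≤ s * (x - a) := by nlinarith [hD.1]
    have hE1 : s * (b - x) ≤ b - x := by nlinarith [hD.2]
    have hE2 : -(b - x) ≤ s * (b - x) := by nlinarith [hD.1]
    have hεba : b - a ≤ ε * (b - a) := by nlinarith
    have hexp : s * (b - a) - s * (x - a) = s * (b - x) := by ring
    rw [abs_le]
    constructor
    · rcases le_total (x - a) (b - x) with hcase | hcase
      · linarith [hA.1, hD1, hεba]
      · linarith [hB.2, hE2, hfb, hexp, hεba]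
    · rcases le_total (x - a) (b - x) with hcase | hcase
      · linarith [hA.2, hD2, hεba]
      · linarith [hB.1, hE1, hfb, hexp, hεba]
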